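/- Let G be a stepwise irregular graph on n vertices, i.e., |d(u) − d(v)| = 1 for every edge uv of G. Then the maximum degree satisfies Δ(G) ≤ ⌊(n+1)/2⌋. -/
import Mathlib


open Finset

/-- Albertson irregularity index: sum over edges of |d(u) - d(v)|. -/
noncomputable def irr {V : Type*} [Fintype V] (G : SimpleGraph V) : ℝ :=
  letI := Classical.decEq V
  letI := Classical.decRel G.Adj
  ∑ e ∈ G.edgeFinset,
    Sym2.lift ⟨fun u v => |(G.degree u : ℝ) - (G.degree v : ℝ)|,
      fun u v => by simp [abs_sub_comm]⟩ e

/-- Sigma index: sum over edges of (d(u) - d(v))². -/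
noncomputable def sigmaIdx {V : Type*} [Fintype V] (G : SimpleGraph V) : ℝ :=
  letI := Classical.decEq V
  letI := Classical.decRel G.Adj
  ∑ e ∈ G.edgeFinset,
    Sym2.lift ⟨fun u v => ((G.degree u : ℝ) - (G.degree v : ℝ)) ^ 2,
      fun u v => by ring⟩ e

/-- The caterpillar C(n,m): a path on `n` spine vertices `(i, 0)`, each spine vertex
having `m` pendant leaves `(i, j)` for `j ≠ 0`. -/
def caterpillar (n m : ℕ) : SimpleGraph (Fin n × Fin (m + 1)) :=
  SimpleGraph.fromRel (fun a b =>
    (a.2 = 0 ∧ b.2 = 0 ∧ a.1.val + 1 = b.1.val) ∨ (a.1 = b.1 ∧ a.2 = 0 ∧ b.2 ≠ 0))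

theorem stepwise_irregular_maxDegree {V : Type*} [Fintype V] (G : SimpleGraph V)
    [DecidableRel G.Adj]
    (hstep : ∀ u v, G.Adj u v → |(G.degree u : ℤ) - (G.degree v : ℤ)| = 1) :
    G.maxDegree ≤ (Fintype.card V + 1) / 2 := by
  classical
  apply SimpleGraph.maxDegree_le_of_forall_degree_le
  intro v
  by_cases hv : G.degree v = 0
  · omega
  · -- v has a neighbor u
    obtain ⟨u, hu⟩ : ∃ u, G.Adj v u := by
      have : (G.neighborFinset v).Nonempty := by
        rw [← Finset.card_pos, SimpleGraph.card_neighborFinset_eq_degree]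
        omega
      obtain ⟨u, hu⟩ := this
      exact ⟨u, (SimpleGraph.mem_neighborFinset G v u).mp hu⟩
    have hdisj : Disjoint (G.neighborFinset v) (G.neighborFinset u) := by
      rw [Finset.disjoint_left]
      intro w hwv hwu
      rw [SimpleGraph.mem_neighborFinset] at hwv hwu
      have h1 := hstep v w hwv
      have h2 := hstep u w hwu
      have h3 := hstep v u hu
      rw [abs_eq (by norm_num : (0:ℤ) ≤ 1)] at h1 h2 h3
      omega
    have hcard : G.degree v + G.degree u ≤ Fintype.card V := by
      have := Finset.card_le_univ (G.neighborFinset v ∪ G.neighborFinset u)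
      rw [Finset.card_union_of_disjoint hdisj] at this
      simpa [SimpleGraph.card_neighborFinset_eq_degree] using this
    have h3 := hstep v u hu
    rw [abs_eq (by norm_num : (0:ℤ) ≤ 1)] at h3
    omega
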